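/- Let G be an E-graph and let H^wr(G) denote the set of weakly reversible E-graphs H for which G admits a realization with respect to H. If H₁, H₂ ∈ H^wr(G), then H₁ ∪ H₂ ∈ H^wr(G). Consequently, if H^wr(G) is nonempty and finite, the partially ordered set (H^wr(G), ⊆) has a unique maximal element. -/

import Mathlib

open scoped Classical

/-- The species-formation function of an E-graph with edge labels. -/
noncomputable def specForm {n : ℕ} (E : Finset ((Fin n → ℝ) × (Fin n → ℝ)))
    (κ : ((Fin n → ℝ) × (Fin n → ℝ)) → ℝ) (x : Fin n → ℝ) : Fin n → ℝ :=
  ∑ e ∈ E, (κ e * ∏ i, x i ^ e.1 i) • (e.2 - e.1)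

/-- An E-graph (given by its edge set) is weakly reversible if for any two points there is
a directed path from one to the other iff there is one back. -/
def weaklyReversible {n : ℕ} (E : Finset ((Fin n → ℝ) × (Fin n → ℝ))) : Prop :=
  ∀ y y' : Fin n → ℝ,
    Relation.ReflTransGen (fun a b => (a, b) ∈ E) y y' ↔
      Relation.ReflTransGen (fun a b => (a, b) ∈ E) y' y

/-- `G` admits a realization with respect to `H`: there are positive edge labels on both
graphs giving the same species-formation function on the positive orthant. -/
def realizes {n : ℕ} (EG EH : Finset ((Fin n → ℝ) × (Fin n → ℝ))) : Prop :=
  ∃ κ lam : ((Fin n → ℝ) × (Fin n → ℝ)) → ℝ,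
    (∀ e ∈ EG, 0 < κ e) ∧ (∀ e ∈ EH, 0 < lam e) ∧
      ∀ x : Fin n → ℝ, (∀ i, 0 < x i) → specForm EG κ x = specForm EH lam x

/-- The set `H^wr(G)` of weakly reversible E-graphs with respect to which `G` admits a
realization. -/
def Hwr {n : ℕ} (EG : Finset ((Fin n → ℝ) × (Fin n → ℝ))) :
    Set (Finset ((Fin n → ℝ) × (Fin n → ℝ))) :=
  {EH | weaklyReversible EH ∧ realizes EG EH}

private lemma rtg_symm {α : Type*} {r : α → α → Prop}
    (h : ∀ a b, r a b → Relation.ReflTransGen r b a) :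
    ∀ {y y' : α}, Relation.ReflTransGen r y y' → Relation.ReflTransGen r y' y := by
  intro y y' hp
  induction hp with
  | refl => exact .refl
  | tail _ hstep ih => exact (h _ _ hstep).trans ih

private lemma specForm_congr {n : ℕ} (E : Finset ((Fin n → ℝ) × (Fin n → ℝ)))
    (κ κ' : ((Fin n → ℝ) × (Fin n → ℝ)) → ℝ) (x : Fin n → ℝ)
    (h : ∀ e ∈ E, κ e = κ' e) : specForm E κ x = specForm E κ' x := by
  unfold specForm
  exact Finset.sum_congr rfl fun e he => by rw [h e he]

private lemma specForm_subset {n : ℕ} {E E' : Finset ((Fin n → ℝ) × (Fin n → ℝ))}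
    (hsub : E' ⊆ E) (κ : ((Fin n → ℝ) × (Fin n → ℝ)) → ℝ) (x : Fin n → ℝ)
    (h0 : ∀ e ∈ E, e ∉ E' → κ e = 0) : specForm E κ x = specForm E' κ x := by
  unfold specForm
  exact (Finset.sum_subset hsub fun e he hne => by rw [h0 e he hne]; simp).symm

private lemma specForm_add {n : ℕ} (E : Finset ((Fin n → ℝ) × (Fin n → ℝ)))
    (κ₁ κ₂ : ((Fin n → ℝ) × (Fin n → ℝ)) → ℝ) (x : Fin n → ℝ) :
    specForm E (fun e => κ₁ e + κ₂ e) x = specForm E κ₁ x + specForm E κ₂ x := by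
  unfold specForm
  rw [← Finset.sum_add_distrib]
  exact Finset.sum_congr rfl fun e _ => by rw [add_mul, add_smul]

/-- `H^wr(G)` is closed under unions; consequently, if it is nonempty
and finite, it has a unique maximal element. -/
theorem stmt_3 {n : ℕ} (EG : Finset ((Fin n → ℝ) × (Fin n → ℝ))) :
    (∀ H₁ H₂, H₁ ∈ Hwr EG → H₂ ∈ Hwr EG → H₁ ∪ H₂ ∈ Hwr EG) ∧
    ((Hwr EG).Nonempty → (Hwr EG).Finite →
      ∃! M, M ∈ Hwr EG ∧ ∀ H ∈ Hwr EG, H ⊆ M) := by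
  have hclosed : ∀ H₁ H₂, H₁ ∈ Hwr EG → H₂ ∈ Hwr EG → H₁ ∪ H₂ ∈ Hwr EG := by
    rintro H₁ H₂ ⟨hwr₁, κ₁, lam₁, hκ₁, hlam₁, heq₁⟩ ⟨hwr₂, κ₂, lam₂, hκ₂, hlam₂, heq₂⟩
    constructor
    · -- weak reversibility of the union
      intro y y'
      have key : ∀ a b : Fin n → ℝ, (a, b) ∈ H₁ ∪ H₂ →
          Relation.ReflTransGen (fun a b => (a, b) ∈ H₁ ∪ H₂) b a := by
        intro a b hab
        rcases Finset.mem_union.mp hab with h | h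
        · exact Relation.ReflTransGen.mono
            (fun u v huv => Finset.mem_union_left _ huv) _ _ ((hwr₁ a b).mp (Relation.ReflTransGen.single h))
        · exact Relation.ReflTransGen.mono
            (fun u v huv => Finset.mem_union_right _ huv) _ _ ((hwr₂ a b).mp (Relation.ReflTransGen.single h))
      exact ⟨rtg_symm key, rtg_symm key⟩
    · -- realization of G with respect to the union
      refine ⟨fun e => κ₁ e + κ₂ e,
        fun e => (if e ∈ H₁ then lam₁ e else 0) + (if e ∈ H₂ then lam₂ e else 0),
        fun e he => add_pos (hκ₁ e he) (hκ₂ e he), ?_, ?_⟩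
      · intro e he
        rcases Finset.mem_union.mp he with h | h
        · refine add_pos_of_pos_of_nonneg (by simp [h, hlam₁ e h]) ?_
          split <;> [exact (hlam₂ e ‹_›).le; exact le_refl 0]
        · refine add_pos_of_nonneg_of_pos ?_ (by simp [h, hlam₂ e h])
          split <;> [exact (hlam₁ e ‹_›).le; exact le_refl 0]
      · intro x hx
        rw [specForm_add, specForm_add, heq₁ x hx, heq₂ x hx]
        congr 1
        · rw [specForm_subset Finset.subset_union_left
            (fun e => if e ∈ H₁ then lam₁ e else 0) x
            (fun e _ hne => by simp [hne])]
          exact (specForm_congr _ _ _ x (fun e he => by simp [he])).symm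
        · rw [specForm_subset Finset.subset_union_right
            (fun e => if e ∈ H₂ then lam₂ e else 0) x
            (fun e _ hne => by simp [hne])]
          exact (specForm_congr _ _ _ x (fun e he => by simp [he])).symm
  refine ⟨hclosed, ?_⟩
  intro hne hfin
  set S : Finset (Finset ((Fin n → ℝ) × (Fin n → ℝ))) := hfin.toFinset with hS
  have hSne : S.Nonempty := by
    obtain ⟨H, hH⟩ := hne
    exact ⟨H, hfin.mem_toFinset.mpr hH⟩
  refine ⟨S.sup' hSne id, ⟨?_, ?_⟩, ?_⟩
  · exact Finset.sup'_induction hSne id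
      (fun a ha b hb => hclosed a b ha hb)
      (fun b hb => hfin.mem_toFinset.mp hb)
  · intro H hH
    exact Finset.le_sup' id (hfin.mem_toFinset.mpr hH)
  · rintro M ⟨hM, hMmax⟩
    apply Finset.Subset.antisymm
    · exact Finset.le_sup' id (hfin.mem_toFinset.mpr hM)
    · exact hMmax _ (Finset.sup'_induction hSne id
        (fun a ha b hb => hclosed a b ha hb)
        (fun b hb => hfin.mem_toFinset.mp hb))
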